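/- Let n ≥ 1 and let J₁, J₂ : ℝ → (m×m real matrices) be n-times continuously differentiable families with J₁(t)·J₁(t) = −I and J₂(t)·J₂(t) = −I for all t. If the k-th derivatives of J₁ and J₂ at 0 agree for every k < n (in particular J₁(0) = J₂(0)), then the difference of n-th derivatives D = J₂⁽ⁿ⁾(0) − J₁⁽ⁿ⁾(0) anticommutes with J₁(0), i.e. D·J₁(0) + J₁(0)·D = 0. -/

import Mathlib

attribute [local instance] Matrix.normedAddCommGroup Matrix.normedSpace

section Aux

variable {m : ℕ}

local notation "M" => Matrix (Fin m) (Fin m) ℝ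

local instance instTopMatNorm {m : ℕ} : TopologicalSpace (Matrix (Fin m) (Fin m) ℝ) :=
  (inferInstance : NormedAddCommGroup (Matrix (Fin m) (Fin m) ℝ)).toPseudoMetricSpace.toUniformSpace.toTopologicalSpace

/-- Matrix multiplication as a continuous bilinear map (continuity from finite dimension). -/
noncomputable def mulCLM (m : ℕ) :
    Matrix (Fin m) (Fin m) ℝ →L[ℝ] Matrix (Fin m) (Fin m) ℝ →L[ℝ] Matrix (Fin m) (Fin m) ℝ :=
  LinearMap.toContinuousLinearMap
    { toFun := fun A => LinearMap.toContinuousLinearMap (LinearMap.mulLeft ℝ A)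
      map_add' := by intros; ext; simp [Matrix.add_mul]
      map_smul' := by intros; ext; simp [Matrix.smul_mul] }

@[simp] lemma mulCLM_apply (A B : M) : mulCLM m A B = A * B := rfl

lemma iteratedDeriv_add' {F : Type*} [NormedAddCommGroup F] [NormedSpace ℝ F] {n : ℕ}
    {f g : ℝ → F} (hf : ContDiff ℝ n f) (hg : ContDiff ℝ n g) (x : ℝ) :
    iteratedDeriv n (fun t => f t + g t) x = iteratedDeriv n f x + iteratedDeriv n g x := by
  have h : (fun t => f t + g t) = f + g := rfl
  rw [h, ← iteratedDerivWithin_univ, ← iteratedDerivWithin_univ, ← iteratedDerivWithin_univ,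
    iteratedDerivWithin_add (Set.mem_univ x) uniqueDiffOn_univ hf.contDiffWithinAt hg.contDiffWithinAt]

lemma iteratedDeriv_const_fun {F : Type*} [NormedAddCommGroup F] [NormedSpace ℝ F] {n : ℕ}
    (hn : 0 < n) (c : F) : iteratedDeriv n (fun _ : ℝ => c) = 0 := by
  obtain ⟨k, rfl⟩ := Nat.exists_eq_succ_of_ne_zero hn.ne'
  rw [iteratedDeriv_succ', deriv_const', iteratedDeriv_eq_iterate]
  have h0 : deriv (fun _ : ℝ => (0 : F)) = fun _ => (0 : F) := deriv_const' 0
  rw [Function.iterate_fixed h0 k]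
  rfl

lemma pascal_sum {A : Type*} [AddCommMonoid A] (n : ℕ) (T : ℕ → A) :
    ∑ k ∈ Finset.range (n + 1), n.choose k • T (k + 1)
      + ∑ k ∈ Finset.range (n + 1), n.choose k • T k
      = ∑ k ∈ Finset.range (n + 2), (n + 1).choose k • T k := by
  rw [Finset.sum_range_succ' (fun k => (n + 1).choose k • T k) (n + 1)]
  simp only [Nat.choose_succ_succ, add_smul, Finset.sum_add_distrib, Nat.choose_zero_right,
    one_smul]
  have h2 : ∑ k ∈ Finset.range (n + 1), n.choose (k + 1) • T (k + 1) + T 0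
      = ∑ k ∈ Finset.range (n + 1), n.choose k • T k := by
    rw [Finset.sum_range_succ (fun k => n.choose (k + 1) • T (k + 1)) n]
    simp only [Nat.choose_succ_self, zero_smul, add_zero]
    rw [Finset.sum_range_succ' (fun k => n.choose k • T k) n]
    simp
  rw [add_assoc, h2]

/-- Leibniz rule for iterated derivatives of a product of matrix-valued functions. -/
lemma leibniz (m : ℕ) : ∀ (n : ℕ) (f g : ℝ → Matrix (Fin m) (Fin m) ℝ),
    ContDiff ℝ n f → ContDiff ℝ n g → ∀ x : ℝ,
    iteratedDeriv n (fun t => f t * g t) x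
      = ∑ k ∈ Finset.range (n + 1),
          n.choose k • (iteratedDeriv k f x * iteratedDeriv (n - k) g x) := by
  intro n
  induction n with
  | zero => intro f g _ _ x; simp
  | succ n IH =>
    intro f g hf hg x
    have hf1 : ContDiff ℝ ((n : WithTop ℕ∞) + 1) f := by exact_mod_cast hf
    have hg1 : ContDiff ℝ ((n : WithTop ℕ∞) + 1) g := by exact_mod_cast hg
    have hf' : Differentiable ℝ f := (contDiff_succ_iff_deriv.mp hf1).1
    have hg' : Differentiable ℝ g := (contDiff_succ_iff_deriv.mp hg1).1
    have hdf : ContDiff ℝ n (deriv f) := (contDiff_succ_iff_deriv.mp hf1).2.2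
    have hdg : ContDiff ℝ n (deriv g) := (contDiff_succ_iff_deriv.mp hg1).2.2
    have hfn : ContDiff ℝ n f := hf1.of_le (by exact_mod_cast le_self_add)
    have hgn : ContDiff ℝ n g := hg1.of_le (by exact_mod_cast le_self_add)
    have hder : deriv (fun t => f t * g t)
        = fun t => deriv f t * g t + f t * deriv g t := by
      funext t
      have h1 : HasDerivAt (fun y => mulCLM m (f y))
          (mulCLM m (deriv f t)) t :=
        (mulCLM m).hasFDerivAt.comp_hasDerivAt t (hf' t).hasDerivAt
      have h2 : HasDerivAt (fun y => mulCLM m (f y) (g y))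
          (mulCLM m (deriv f t) (g t) + mulCLM m (f t) (deriv g t)) t :=
        h1.clm_apply (hg' t).hasDerivAt
      simpa using h2.deriv
    rw [iteratedDeriv_succ', hder]
    have hsplit : iteratedDeriv n (fun t => deriv f t * g t + f t * deriv g t) x
        = iteratedDeriv n (fun t => deriv f t * g t) x
          + iteratedDeriv n (fun t => f t * deriv g t) x := by
      have c1 : ContDiff ℝ n (fun t => deriv f t * g t) := by
        have h := (mulCLM m).isBoundedBilinearMap.contDiff.comp (hdf.prodMk hgn)
        simpa [Function.comp_def] using h
      have c2 : ContDiff ℝ n (fun t => f t * deriv g t) := by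
        have h := (mulCLM m).isBoundedBilinearMap.contDiff.comp (hfn.prodMk hdg)
        simpa [Function.comp_def] using h
      exact iteratedDeriv_add' c1 c2 x
    rw [hsplit, IH (deriv f) g hdf hgn x, IH f (deriv g) hfn hdg x]
    have e1 : ∑ k ∈ Finset.range (n + 1),
          n.choose k • (iteratedDeriv k (deriv f) x * iteratedDeriv (n - k) g x)
        = ∑ k ∈ Finset.range (n + 1),
          n.choose k • (iteratedDeriv (k + 1) f x * iteratedDeriv (n + 1 - (k + 1)) g x) := by
      apply Finset.sum_congr rfl
      intro k _
      rw [← iteratedDeriv_succ']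
      have h' : n + 1 - (k + 1) = n - k := by omega
      rw [h']
    have e2 : ∑ k ∈ Finset.range (n + 1),
          n.choose k • (iteratedDeriv k f x * iteratedDeriv (n - k) (deriv g) x)
        = ∑ k ∈ Finset.range (n + 1),
          n.choose k • (iteratedDeriv k f x * iteratedDeriv (n + 1 - k) g x) := by
      apply Finset.sum_congr rfl
      intro k hk
      rw [Finset.mem_range] at hk
      rw [← iteratedDeriv_succ']
      have h' : n + 1 - k = n - k + 1 := by omega
      rw [h']
    rw [e1, e2]
    exact pascal_sum n (fun j => iteratedDeriv j f x * iteratedDeriv (n + 1 - j) g x)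

end Aux

/-- Let `J₁, J₂ : ℝ → Matrix (Fin m) (Fin m) ℝ` be `n`-times continuously differentiable
families of linear complex structures (`Jᵢ t * Jᵢ t = -1`). If their `k`-th derivatives
at `0` agree for every `k < n`, then `D = J₂⁽ⁿ⁾ 0 - J₁⁽ⁿ⁾ 0` anticommutes with `J₁ 0`. -/
theorem stmt4 (m n : ℕ) (hn : 1 ≤ n) (J₁ J₂ : ℝ → Matrix (Fin m) (Fin m) ℝ)
    (hJ₁smooth : ContDiff ℝ n J₁) (hJ₂smooth : ContDiff ℝ n J₂)
    (hJ₁ : ∀ t, J₁ t * J₁ t = -1) (hJ₂ : ∀ t, J₂ t * J₂ t = -1)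
    (hagree : ∀ k < n, iteratedDeriv k J₁ 0 = iteratedDeriv k J₂ 0) :
    (iteratedDeriv n J₂ 0 - iteratedDeriv n J₁ 0) * J₁ 0
      + J₁ 0 * (iteratedDeriv n J₂ 0 - iteratedDeriv n J₁ 0) = 0 := by
  have key : ∀ J : ℝ → Matrix (Fin m) (Fin m) ℝ, ContDiff ℝ n J → (∀ t, J t * J t = -1) →
      ∑ k ∈ Finset.range (n + 1),
        n.choose k • (iteratedDeriv k J 0 * iteratedDeriv (n - k) J 0) = 0 := by
    intro J hJs hJc
    have h := leibniz m n J J hJs hJs 0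
    rw [show (fun t => J t * J t) = (fun _ : ℝ => (-1 : Matrix (Fin m) (Fin m) ℝ)) from
      funext hJc] at h
    rw [iteratedDeriv_const_fun (by omega) (-1)] at h
    simpa using h.symm
  set A₁ : ℕ → Matrix (Fin m) (Fin m) ℝ := fun k => iteratedDeriv k J₁ 0 with hA₁
  set A₂ : ℕ → Matrix (Fin m) (Fin m) ℝ := fun k => iteratedDeriv k J₂ 0 with hA₂
  have hsum : ∑ k ∈ Finset.range (n + 1),
      (n.choose k • (A₂ k * A₂ (n - k)) - n.choose k • (A₁ k * A₁ (n - k))) = 0 := by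
    rw [Finset.sum_sub_distrib, key J₂ hJ₂smooth hJ₂, key J₁ hJ₁smooth hJ₁, sub_zero]
  have hmid : ∀ k ∈ Finset.range (n + 1), k ≠ 0 → k ≠ n →
      n.choose k • (A₂ k * A₂ (n - k)) - n.choose k • (A₁ k * A₁ (n - k)) = 0 := by
    intro k hk hk0 hkn
    rw [Finset.mem_range] at hk
    have h1 : A₁ k = A₂ k := hagree k (by omega)
    have h2 : A₁ (n - k) = A₂ (n - k) := hagree (n - k) (by omega)
    rw [h1, h2, sub_self]
  have hsub : ({0, n} : Finset ℕ) ⊆ Finset.range (n + 1) := by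
    intro k hk
    simp only [Finset.mem_insert, Finset.mem_singleton] at hk
    rw [Finset.mem_range]; omega
  have hpair : ∑ k ∈ ({0, n} : Finset ℕ),
      (n.choose k • (A₂ k * A₂ (n - k)) - n.choose k • (A₁ k * A₁ (n - k))) = 0 := by
    rw [Finset.sum_subset hsub (fun k hk hk' => by
      simp only [Finset.mem_insert, Finset.mem_singleton, not_or] at hk'
      exact hmid k hk hk'.1 hk'.2)]
    exact hsum
  rw [Finset.sum_pair (by omega : (0 : ℕ) ≠ n)] at hpair
  have h01 : J₁ 0 = J₂ 0 := by
    have h := hagree 0 (by omega)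
    simpa only [iteratedDeriv_zero] using h
  have h00 : A₁ 0 = J₁ 0 := by
    calc A₁ 0 = iteratedDeriv 0 J₁ 0 := rfl
      _ = J₁ 0 := by rw [iteratedDeriv_zero]
  have h02 : A₂ 0 = J₁ 0 := by
    calc A₂ 0 = iteratedDeriv 0 J₂ 0 := rfl
      _ = J₂ 0 := by rw [iteratedDeriv_zero]
      _ = J₁ 0 := h01.symm
  simp only [Nat.choose_zero_right, Nat.choose_self, one_smul, Nat.sub_zero, Nat.sub_self,
    h00, h02] at hpair
  have : J₁ 0 * (A₂ n - A₁ n) + (A₂ n - A₁ n) * J₁ 0 = 0 := by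
    rw [mul_sub, sub_mul]
    linear_combination (norm := abel) hpair
  rw [add_comm] at this
  exact this
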